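/- For the 2×n grid graph P_2 × P_n with n ≥ 1, γ_R(P_2 × P_n) = n + 1. -/

import Mathlib

open SimpleGraph Finset

/-- A Roman dominating function: values in {0,1,2}, every 0-vertex has a neighbor with value 2. -/
def IsRDF {V : Type*} (G : SimpleGraph V) (f : V → ℕ) : Prop :=
  (∀ v, f v ≤ 2) ∧ ∀ v, f v = 0 → ∃ u, G.Adj v u ∧ f u = 2

/-- The Roman domination number: minimum weight of a Roman dominating function. -/
noncomputable def romanDom {V : Type*} [Fintype V] (G : SimpleGraph V) : ℕ :=
  sInf {k | ∃ f : V → ℕ, IsRDF G f ∧ ∑ v, f v = k}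

/-- A dominating set. -/
def IsDomSet {V : Type*} (G : SimpleGraph V) (S : Set V) : Prop :=
  ∀ v, v ∈ S ∨ ∃ u ∈ S, G.Adj u v

/-- The domination number. -/
noncomputable def domNum {V : Type*} [Fintype V] (G : SimpleGraph V) : ℕ :=
  sInf {k | ∃ S : Set V, IsDomSet G S ∧ S.ncard = k}

/-- Degree of a vertex. -/
noncomputable def deg {V : Type*} (G : SimpleGraph V) (v : V) : ℕ :=
  (G.neighborSet v).ncard

/-- Maximum degree. -/
noncomputable def maxDeg {V : Type*} (G : SimpleGraph V) : ℕ :=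
  sSup {d | ∃ v, deg G v = d}

/-- Minimum degree. -/
noncomputable def minDeg {V : Type*} (G : SimpleGraph V) : ℕ :=
  sInf {d | ∃ v, deg G v = d}

/-- The Roman bondage number: minimum size of an edge set whose deletion increases `romanDom`. -/
noncomputable def romanBondage {V : Type*} [Fintype V] (G : SimpleGraph V) : ℕ :=
  sInf {k | ∃ B : Set (Sym2 V), B ⊆ G.edgeSet ∧
    romanDom (G.deleteEdges B) > romanDom G ∧ B.ncard = k}

/-- The bondage number: minimum size of an edge set whose deletion increases `domNum`. -/
noncomputable def bondage {V : Type*} [Fintype V] (G : SimpleGraph V) : ℕ :=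
  sInf {k | ∃ B : Set (Sym2 V), B ⊆ G.edgeSet ∧
    domNum (G.deleteEdges B) > domNum G ∧ B.ncard = k}

/-- A vertex cover. -/
def IsVC {V : Type*} (G : SimpleGraph V) (S : Set V) : Prop :=
  ∀ u v, G.Adj u v → u ∈ S ∨ v ∈ S

/-- The vertex covering number. -/
noncomputable def vcNum {V : Type*} [Fintype V] (G : SimpleGraph V) : ℕ :=
  sInf {k | ∃ S : Set V, IsVC G S ∧ S.ncard = k}

private lemma RD16_adjChar {m n : ℕ} (x y : Fin m × Fin n) :
    (SimpleGraph.pathGraph m □ SimpleGraph.pathGraph n).Adj x y ↔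
      ((x.1.val+1=y.1.val ∨ y.1.val+1=x.1.val) ∧ x.2 = y.2) ∨
      ((x.2.val+1=y.2.val ∨ y.2.val+1=x.2.val) ∧ x.1 = y.1) := by
  simp [SimpleGraph.boxProd_adj, SimpleGraph.pathGraph_adj]

private lemma RD16_nbr {n : ℕ} {f : Fin 2 × Fin n → ℕ}
    (hf : IsRDF (SimpleGraph.pathGraph 2 □ SimpleGraph.pathGraph n) f)
    {i : Fin 2} {j : Fin n} (h0 : f (i, j) = 0) :
    (∃ i' : Fin 2, i'.val ≠ i.val ∧ f (i', j) = 2) ∨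
    (∃ j' : Fin n, (j'.val = j.val + 1 ∨ j'.val + 1 = j.val) ∧ f (i, j') = 2) := by
  obtain ⟨⟨i', j'⟩, hadj, h2⟩ := hf.2 _ h0
  rw [RD16_adjChar] at hadj
  simp only at hadj
  rcases hadj with ⟨hr, hc⟩ | ⟨hc, hr⟩
  · exact Or.inl ⟨i', by omega, by rw [← hc] at h2; exact h2⟩
  · exact Or.inr ⟨j', by omega, by rw [← hr] at h2; exact h2⟩

private lemma RD16_lb1 (f : Fin 2 × Fin 1 → ℕ)
    (hf : IsRDF (SimpleGraph.pathGraph 2 □ SimpleGraph.pathGraph 1) f) :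
    1 + 1 ≤ ∑ v, f v := by
  have e : ∑ v, f v = f (0, 0) + f (1, 0) := by
    simp [Fintype.sum_prod_type, Fin.sum_univ_two, Fin.sum_univ_one]
  have h1 : f (0, 0) = 0 → f (1, 0) = 2 := by
    intro h
    rcases RD16_nbr hf h with ⟨i', hi, h2⟩ | ⟨j', hj, h2⟩
    · simp only [Fin.val_zero] at hi
      rwa [show i' = 1 from Fin.ext (by omega)] at h2
    · exact absurd hj (by have := j'.isLt; simp only [Fin.val_zero] at *; omega)
  have h2 : f (1, 0) = 0 → f (0, 0) = 2 := by
    intro h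
    rcases RD16_nbr hf h with ⟨i', hi, h2⟩ | ⟨j', hj, h2⟩
    · simp only [Fin.val_one] at hi
      rwa [show i' = 0 from Fin.ext (by omega)] at h2
    · exact absurd hj (by have := j'.isLt; simp only [Fin.val_zero] at *; omega)
  have b1 := hf.1 (0, 0); have b2 := hf.1 (1, 0)
  omega

private lemma RD16_lb2 (f : Fin 2 × Fin 2 → ℕ)
    (hf : IsRDF (SimpleGraph.pathGraph 2 □ SimpleGraph.pathGraph 2) f) :
    2 + 1 ≤ ∑ v, f v := by
  have e : ∑ v, f v = f (0, 0) + f (0, 1) + (f (1, 0) + f (1, 1)) := by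
    simp [Fintype.sum_prod_type, Fin.sum_univ_two]
  have k00 : f (0, 0) = 0 → f (1, 0) = 2 ∨ f (0, 1) = 2 := by
    intro h
    rcases RD16_nbr hf h with ⟨i', hi, h2⟩ | ⟨j', hj, h2⟩
    · simp only [Fin.val_zero] at hi
      exact Or.inl (by rwa [show i' = 1 from Fin.ext (by omega)] at h2)
    · simp only [Fin.val_zero] at hj
      exact Or.inr (by rwa [show j' = 1 from Fin.ext (by have := j'.isLt; omega)] at h2)
  have k01 : f (0, 1) = 0 → f (1, 1) = 2 ∨ f (0, 0) = 2 := by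
    intro h
    rcases RD16_nbr hf h with ⟨i', hi, h2⟩ | ⟨j', hj, h2⟩
    · simp only [Fin.val_zero] at hi
      exact Or.inl (by rwa [show i' = 1 from Fin.ext (by omega)] at h2)
    · simp only [Fin.val_one] at hj
      exact Or.inr (by rwa [show j' = 0 from Fin.ext (by have := j'.isLt; omega)] at h2)
  have k10 : f (1, 0) = 0 → f (0, 0) = 2 ∨ f (1, 1) = 2 := by
    intro h
    rcases RD16_nbr hf h with ⟨i', hi, h2⟩ | ⟨j', hj, h2⟩
    · simp only [Fin.val_one] at hi
      exact Or.inl (by rwa [show i' = 0 from Fin.ext (by have := i'.isLt; omega)] at h2)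
    · simp only [Fin.val_zero] at hj
      exact Or.inr (by rwa [show j' = 1 from Fin.ext (by have := j'.isLt; omega)] at h2)
  have k11 : f (1, 1) = 0 → f (0, 1) = 2 ∨ f (1, 0) = 2 := by
    intro h
    rcases RD16_nbr hf h with ⟨i', hi, h2⟩ | ⟨j', hj, h2⟩
    · simp only [Fin.val_one] at hi
      exact Or.inl (by rwa [show i' = 0 from Fin.ext (by have := i'.isLt; omega)] at h2)
    · simp only [Fin.val_one] at hj
      exact Or.inr (by rwa [show j' = 0 from Fin.ext (by have := j'.isLt; omega)] at h2)
  have b1 := hf.1 (0, 0); have b2 := hf.1 (0, 1); have b3 := hf.1 (1, 0); have b4 := hf.1 (1, 1)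
  omega

private lemma RD16_step (k : ℕ)
    (IH : ∀ f : Fin 2 × Fin (k+1) → ℕ,
      IsRDF (SimpleGraph.pathGraph 2 □ SimpleGraph.pathGraph (k+1)) f → k + 2 ≤ ∑ v, f v)
    (f : Fin 2 × Fin (k+3) → ℕ)
    (hf : IsRDF (SimpleGraph.pathGraph 2 □ SimpleGraph.pathGraph (k+3)) f) :
    k + 4 ≤ ∑ v, f v := by
  have hc1 : (k+1) < k+3 := by omega
  have hc2 : (k+2) < k+3 := by omega
  set emb : Fin (k+1) → Fin (k+3) := fun j => ⟨j.val, by omega⟩ with hemb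
  set g : Fin 2 × Fin (k+1) → ℕ := fun v =>
    if f (v.1, emb v.2) = 0 ∧ v.2.val = k ∧ f (v.1, ⟨k+1, hc1⟩) = 2 then 1
    else f (v.1, emb v.2) with hg
  have hgRDF : IsRDF (SimpleGraph.pathGraph 2 □ SimpleGraph.pathGraph (k+1)) g := by
    constructor
    · intro v
      simp only [hg]
      split
      · omega
      · exact hf.1 _
    · rintro ⟨i, j⟩ hv
      simp only [hg] at hv
      split_ifs at hv with hcond
      push_neg at hcond
      obtain ⟨⟨i', j'⟩, hadj, h2⟩ := hf.2 _ hv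
      rw [RD16_adjChar] at hadj
      simp only at hadj
      rcases hadj with ⟨hr, hc⟩ | ⟨hc, hr⟩
      · refine ⟨(i', j), (RD16_adjChar _ _).2 (Or.inl ⟨hr, rfl⟩), ?_⟩
        rw [← hc] at h2
        simp only [hg]
        rw [if_neg (by rw [h2]; simp)]
        exact h2
      · rw [← hr] at h2
        have hcv : (j.val + 1 = j'.val ∨ j'.val + 1 = j.val) := hc
        rcases Nat.lt_or_ge j'.val (k+1) with hlt | hge
        · refine ⟨(i, ⟨j'.val, hlt⟩), (RD16_adjChar _ _).2 (Or.inr ⟨hcv, rfl⟩), ?_⟩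
          have hej : emb ⟨j'.val, hlt⟩ = j' := rfl
          simp only [hg, hej]
          rw [if_neg (by rw [h2]; simp)]
          exact h2
        · exfalso
          have hj'v : j'.val = k + 1 := by have := j.isLt; have := j'.isLt; omega
          have hjv : j.val = k := by have := j.isLt; omega
          have : j' = ⟨k+1, hc1⟩ := Fin.ext hj'v
          rw [this] at h2
          exact hcond hv hjv h2
  have hsplit : ∀ i : Fin 2, ∑ j : Fin (k+3), f (i, j)
      = (∑ j : Fin (k+1), f (i, emb j)) + f (i, ⟨k+1, hc1⟩) + f (i, ⟨k+2, hc2⟩) := by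
    intro i
    rw [Fin.sum_univ_castSucc, Fin.sum_univ_castSucc]
    rfl
  have hA : ∀ i : Fin 2, ∑ j : Fin (k+1), g (i, j)
      ≤ (∑ j : Fin (k+1), f (i, emb j)) + (if f (i, ⟨k+1, hc1⟩) = 2 then 1 else 0) := by
    intro i
    calc ∑ j : Fin (k+1), g (i, j)
        ≤ ∑ j : Fin (k+1), (f (i, emb j) +
            if f (i, ⟨k+1, hc1⟩) = 2 ∧ j = Fin.last k then 1 else 0) := by
          apply Finset.sum_le_sum
          intro j _
          simp only [hg]
          have : (j = Fin.last k) ↔ (j.val = k) := by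
            constructor
            · intro h; rw [h]; rfl
            · intro h; exact Fin.ext h
          split_ifs <;> omega
      _ = (∑ j : Fin (k+1), f (i, emb j)) +
            ∑ j : Fin (k+1), (if f (i, ⟨k+1, hc1⟩) = 2 ∧ j = Fin.last k then 1 else 0) := by
          rw [Finset.sum_add_distrib]
      _ ≤ (∑ j : Fin (k+1), f (i, emb j)) + (if f (i, ⟨k+1, hc1⟩) = 2 then 1 else 0) := by
          gcongr
          by_cases hP : f (i, ⟨k+1, hc1⟩) = 2
          · simp [hP]
          · simp [hP]
  have hb0 : f (0, ⟨k+2, hc2⟩) = 0 → f (1, ⟨k+2, hc2⟩) = 2 ∨ f (0, ⟨k+1, hc1⟩) = 2 := by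
    intro h
    rcases RD16_nbr hf h with ⟨i', hi, h2⟩ | ⟨j', hj, h2⟩
    · simp only [Fin.val_zero] at hi
      exact Or.inl (by rwa [show i' = 1 from Fin.ext (by omega)] at h2)
    · have hjv : (j'.val = k+2 + 1 ∨ j'.val + 1 = k+2) := hj
      have := j'.isLt
      exact Or.inr (by rwa [show j' = ⟨k+1, hc1⟩ from Fin.ext (show j'.val = k+1 by omega)] at h2)
  have hb1 : f (1, ⟨k+2, hc2⟩) = 0 → f (0, ⟨k+2, hc2⟩) = 2 ∨ f (1, ⟨k+1, hc1⟩) = 2 := by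
    intro h
    rcases RD16_nbr hf h with ⟨i', hi, h2⟩ | ⟨j', hj, h2⟩
    · simp only [Fin.val_one] at hi
      have := i'.isLt
      exact Or.inl (by rwa [show i' = 0 from Fin.ext (by omega)] at h2)
    · have hjv : (j'.val = k+2 + 1 ∨ j'.val + 1 = k+2) := hj
      have := j'.isLt
      exact Or.inr (by rwa [show j' = ⟨k+1, hc1⟩ from Fin.ext (show j'.val = k+1 by omega)] at h2)
  have hIH := IH g hgRDF
  have egsum : ∑ v, g v = (∑ j : Fin (k+1), g (0, j)) + (∑ j : Fin (k+1), g (1, j)) := by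
    rw [Fintype.sum_prod_type, Fin.sum_univ_two]
  have efsum : ∑ v, f v = (∑ j : Fin (k+3), f (0, j)) + (∑ j : Fin (k+3), f (1, j)) := by
    rw [Fintype.sum_prod_type, Fin.sum_univ_two]
  have hA0 := hA 0
  have hA1 := hA 1
  have hs0 := hsplit 0
  have hs1 := hsplit 1
  have hu0 := hf.1 (0, ⟨k+1, hc1⟩)
  have hu1 := hf.1 (1, ⟨k+1, hc1⟩)
  have hu2 := hf.1 (0, ⟨k+2, hc2⟩)
  have hu3 := hf.1 (1, ⟨k+2, hc2⟩)
  rw [egsum] at hIH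
  rw [efsum, hs0, hs1]
  split_ifs at hA0 hA1 <;> omega

private lemma RD16_lb : ∀ n : ℕ, 1 ≤ n → ∀ f : Fin 2 × Fin n → ℕ,
    IsRDF (SimpleGraph.pathGraph 2 □ SimpleGraph.pathGraph n) f → n + 1 ≤ ∑ v, f v := by
  intro n
  induction n using Nat.strong_induction_on with
  | _ n IH =>
    rcases n with _ | (_ | (_ | k))
    · intro h
      exact absurd h (by omega)
    · intro _ f hf
      exact RD16_lb1 f hf
    · intro _ f hf
      exact RD16_lb2 f hf
    · intro _ f hf
      exact RD16_step k (fun g hg => IH (k+1) (by omega) (by omega) g hg) f hf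

private def RD16_ubf (n : ℕ) : Fin 2 × Fin n → ℕ := fun v =>
  (if v.2.val % 2 = 1 ∧ v.1.val = (v.2.val / 2) % 2 then 2 else 0) +
  (if v.2.val = 0 ∧ (v.1.val = 1 ∨ n = 1) then 1 else 0) +
  (if v.2.val = n - 1 ∧ n % 2 = 1 ∧ 2 ≤ n ∧ v.1.val ≠ ((n-2)/2) % 2 then 1 else 0)

private lemma RD16_ubf_rdf (n : ℕ) (hn : 1 ≤ n) :
    IsRDF (SimpleGraph.pathGraph 2 □ SimpleGraph.pathGraph n) (RD16_ubf n) := by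
  constructor
  · rintro ⟨i, j⟩
    simp only [RD16_ubf]
    split_ifs <;> omega
  · rintro ⟨i, j⟩ h0
    simp only [RD16_ubf] at h0
    have hi := i.isLt; have hj := j.isLt
    have hA : ¬(j.val % 2 = 1 ∧ i.val = (j.val / 2) % 2) := by
      intro hc; rw [if_pos hc] at h0; omega
    have hB : ¬(j.val = 0 ∧ (i.val = 1 ∨ n = 1)) := by
      intro hc; rw [if_pos hc] at h0; omega
    have hC : ¬(j.val = n - 1 ∧ n % 2 = 1 ∧ 2 ≤ n ∧ i.val ≠ ((n-2)/2) % 2) := by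
      intro hc; rw [if_pos hc] at h0; omega
    push_neg at hA hB hC
    by_cases hodd : j.val % 2 = 1
    · -- neighbor in same column
      have hne := hA hodd
      refine ⟨(⟨(j.val / 2) % 2, by omega⟩, j),
        (RD16_adjChar _ _).2 (Or.inl ⟨show i.val + 1 = (j.val/2)%2 ∨ (j.val/2)%2 + 1 = i.val
          by omega, rfl⟩), ?_⟩
      show (if j.val % 2 = 1 ∧ (j.val / 2) % 2 = (j.val / 2) % 2 then 2 else 0) +
        (if j.val = 0 ∧ ((j.val / 2) % 2 = 1 ∨ n = 1) then 1 else 0) +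
        (if j.val = n - 1 ∧ n % 2 = 1 ∧ 2 ≤ n ∧ (j.val / 2) % 2 ≠ ((n-2)/2) % 2
          then 1 else 0) = 2
      split_ifs
      all_goals omega
    · by_cases hrow : i.val = (j.val / 2) % 2
      · -- neighbor to the right
        have hlt : j.val + 1 < n := by
          by_contra hcon
          have hjn : j.val = n - 1 := by omega
          rcases Nat.eq_or_lt_of_le hn with h1 | h1
          · have := hB (by omega)
            omega
          · have := hC hjn (by omega) (by omega)
            omega
        refine ⟨(i, ⟨j.val + 1, hlt⟩),
          (RD16_adjChar _ _).2 (Or.inr ⟨Or.inl rfl, rfl⟩), ?_⟩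
        show (if (j.val+1) % 2 = 1 ∧ i.val = ((j.val+1) / 2) % 2 then 2 else 0) +
          (if j.val+1 = 0 ∧ (i.val = 1 ∨ n = 1) then 1 else 0) +
          (if j.val+1 = n - 1 ∧ n % 2 = 1 ∧ 2 ≤ n ∧ i.val ≠ ((n-2)/2) % 2
            then 1 else 0) = 2
        split_ifs
        all_goals try omega
        all_goals exact (‹False ∧ _›.1).elim
      · -- neighbor to the left
        have hpos : 1 ≤ j.val := by
          by_contra hcon
          have := hB (by omega)
          omega
        refine ⟨(i, ⟨j.val - 1, by omega⟩),
          (RD16_adjChar _ _).2 (Or.inr ⟨Or.inr (show j.val - 1 + 1 = j.val by omega), rfl⟩), ?_⟩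
        show (if (j.val-1) % 2 = 1 ∧ i.val = ((j.val-1) / 2) % 2 then 2 else 0) +
          (if j.val-1 = 0 ∧ (i.val = 1 ∨ n = 1) then 1 else 0) +
          (if j.val-1 = n - 1 ∧ n % 2 = 1 ∧ 2 ≤ n ∧ i.val ≠ ((n-2)/2) % 2
            then 1 else 0) = 2
        split_ifs
        all_goals omega

private lemma RD16_col1 (P : Prop) [Decidable P] (c : ℕ) (hc : c < 2) :
    ((if P ∧ 0 = c then 2 else 0) + (if P ∧ 1 = c then 2 else 0) : ℕ)
      = if P then 2 else 0 := by
  by_cases h : P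
  · simp only [h, true_and]
    split_ifs <;> omega
  · simp [h]

private lemma RD16_col2 (Q R : Prop) [Decidable Q] [Decidable R] :
    ((if Q ∧ ((0:ℕ) = 1 ∨ R) then 1 else 0) + (if Q ∧ (True ∨ R) then 1 else 0) : ℕ)
      = if Q then (if R then 2 else 1) else 0 := by
  by_cases hq : Q
  · simp only [hq, true_and]
    by_cases hr : R <;> simp [hr]
  · simp [hq]

private lemma RD16_col3 (S₁ S₂ S₃ : Prop) [Decidable S₁] [Decidable S₂] [Decidable S₃] (c : ℕ) (hc : c < 2) :
    ((if S₁ ∧ S₂ ∧ S₃ ∧ 0 ≠ c then 1 else 0) + (if S₁ ∧ S₂ ∧ S₃ ∧ 1 ≠ c then 1 else 0) : ℕ)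
      = if S₁ ∧ S₂ ∧ S₃ then 1 else 0 := by
  by_cases h1 : S₁
  · by_cases h2 : S₂
    · by_cases h3 : S₃
      · simp only [h1, h2, h3, true_and]
        split_ifs <;> omega
      · simp [h3]
    · simp [h2]
  · simp [h1]

private lemma RD16_ubf_sum (n : ℕ) (hn : 1 ≤ n) : ∑ v, RD16_ubf n v = n + 1 := by
  have key : ∑ v, RD16_ubf n v = ∑ j ∈ range n,
      ((if j % 2 = 1 then 2 else 0) + ((if j = 0 then (if n = 1 then 2 else 1) else 0) +
        (if j = n - 1 ∧ n % 2 = 1 ∧ 2 ≤ n then 1 else 0))) := by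
    rw [Fintype.sum_prod_type_right, ← Fin.sum_univ_eq_sum_range]
    refine Finset.sum_congr rfl fun j _ => ?_
    rw [Fin.sum_univ_two]
    simp only [RD16_ubf, Fin.val_zero, Fin.val_one]
    rw [← RD16_col1 (j.val % 2 = 1) ((j.val / 2) % 2) (by omega),
      ← RD16_col2 (j.val = 0) (n = 1),
      ← RD16_col3 (j.val = n - 1) (n % 2 = 1) (2 ≤ n) (((n-2)/2) % 2) (by omega)]
    omega
  rw [key, Finset.sum_add_distrib, Finset.sum_add_distrib]
  have S1 : ∀ m : ℕ, ∑ j ∈ range m, (if j % 2 = 1 then 2 else 0) = 2 * (m / 2) := by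
    intro m; induction m with
    | zero => simp
    | succ p ih => rw [Finset.sum_range_succ, ih]; split_ifs <;> omega
  have S2 : ∑ j ∈ range n, (if j = 0 then (if n = 1 then 2 else 1) else 0)
      = (if n = 1 then 2 else 1) := by
    rw [Finset.sum_ite_eq' (range n) 0 (fun _ => if n = 1 then 2 else 1),
      if_pos (Finset.mem_range.mpr (by omega))]
  have S3 : ∑ j ∈ range n, (if j = n - 1 ∧ n % 2 = 1 ∧ 2 ≤ n then 1 else 0)
      = (if n % 2 = 1 ∧ 2 ≤ n then 1 else 0) := by
    by_cases hP : n % 2 = 1 ∧ 2 ≤ n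
    · simp only [hP, and_true, if_true]
      rw [Finset.sum_ite_eq' (range n) (n-1) (fun _ => 1),
        if_pos (Finset.mem_range.mpr (by omega))]
    · simp only [hP, and_false, if_false]
      simp
  rw [S1, S2, S3]
  split_ifs
  all_goals omega

theorem stmt16 (n : ℕ) (hn : 1 ≤ n) :
    romanDom (SimpleGraph.pathGraph 2 □ SimpleGraph.pathGraph n) = n + 1 := by
  have hmem : (n + 1) ∈ {k | ∃ f : Fin 2 × Fin n → ℕ,
      IsRDF (SimpleGraph.pathGraph 2 □ SimpleGraph.pathGraph n) f ∧ ∑ v, f v = k} :=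
    ⟨RD16_ubf n, RD16_ubf_rdf n hn, RD16_ubf_sum n hn⟩
  have h1 : romanDom (SimpleGraph.pathGraph 2 □ SimpleGraph.pathGraph n) ≤ n + 1 :=
    Nat.sInf_le hmem
  have h2 : romanDom (SimpleGraph.pathGraph 2 □ SimpleGraph.pathGraph n) ∈
      {k | ∃ f : Fin 2 × Fin n → ℕ,
        IsRDF (SimpleGraph.pathGraph 2 □ SimpleGraph.pathGraph n) f ∧ ∑ v, f v = k} :=
    Nat.sInf_mem ⟨n + 1, hmem⟩
  obtain ⟨f, hf, hfs⟩ := h2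
  have h3 := RD16_lb n hn f hf
  omega
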